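/- Let k > 0, C₀ ≤ 0, and let (φ, d) solve φ' = -φd, d' = -½(d² + 4k² - C₀φ²) with initial data (φ₀, d₀), φ₀ > 0. Then the solution cannot exist globally forward in time: d satisfies d' ≤ -½(d² + 4k²) and blows up to -∞ in finite time. -/

import Mathlib

/-- Supercritical breakdown: if `C₀ ≤ 0` and `φ₀ > 0`, the reduced system
`φ' = -φd`, `d' = -(d² + 4k² - C₀φ²)/2` admits no global forward-in-time solution. -/
theorem supercritical_breakdown (k C₀ : ℝ) (hk : 0 < k) (hC : C₀ ≤ 0)
    (φ d : ℝ → ℝ)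
    (hφ : ∀ t : ℝ, 0 ≤ t → HasDerivAt φ (-(φ t) * d t) t)
    (hd : ∀ t : ℝ, 0 ≤ t →
      HasDerivAt d (-(1 / 2) * ((d t) ^ 2 + 4 * k ^ 2 - C₀ * (φ t) ^ 2)) t)
    (hφ0 : 0 < φ 0) : False := by
  have hk2 : (0:ℝ) < 2 * k ^ 2 := by positivity
  -- Step 1: g t = d t + 2k² t is antitone on [0, ∞)
  set g : ℝ → ℝ := fun t => d t + 2 * k ^ 2 * t with hgdef
  have hgderiv : ∀ t ∈ Set.Ici (0:ℝ),
      HasDerivAt g (-(1 / 2) * ((d t) ^ 2 + 4 * k ^ 2 - C₀ * (φ t) ^ 2) + 2 * k ^ 2) t := by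
    intro t ht
    have h1 : HasDerivAt (fun t : ℝ => 2 * k ^ 2 * t) (2 * k ^ 2) t := by
      simpa using (hasDerivAt_id t).const_mul (2 * k ^ 2)
    exact (hd t ht).add h1
  have hganti : AntitoneOn g (Set.Ici (0:ℝ)) := by
    apply antitoneOn_of_deriv_nonpos (convex_Ici 0)
    · exact fun t ht => ((hgderiv t ht).continuousAt).continuousWithinAt
    · intro t ht
      rw [interior_Ici] at ht
      exact ((hgderiv t (Set.mem_Ici.mpr (le_of_lt ht))).differentiableAt).differentiableWithinAt
    · intro t ht
      rw [interior_Ici] at ht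
      rw [(hgderiv t (Set.mem_Ici.mpr (le_of_lt ht))).deriv]
      nlinarith [sq_nonneg (d t), sq_nonneg (φ t), mul_nonneg (neg_nonneg.mpr hC) (sq_nonneg (φ t))]
  set T : ℝ := max 0 ((d 0 + 1) / (2 * k ^ 2)) with hTdef
  have hT0 : (0:ℝ) ≤ T := le_max_left _ _
  have hTb : d 0 + 1 ≤ 2 * k ^ 2 * T := by
    have := le_max_right 0 ((d 0 + 1) / (2 * k ^ 2))
    calc d 0 + 1 = ((d 0 + 1) / (2 * k ^ 2)) * (2 * k ^ 2) := by field_simp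
    _ ≤ T * (2 * k ^ 2) := by
        exact mul_le_mul_of_nonneg_right this (le_of_lt hk2)
    _ = 2 * k ^ 2 * T := by ring
  have hdT : d T ≤ -1 := by
    have hg : g T ≤ g 0 := hganti (Set.self_mem_Ici) (Set.mem_Ici.mpr hT0) hT0
    simp only [hgdef] at hg
    linarith
  -- d t ≤ -1 for all t ≥ T
  have hdneg : ∀ t, T ≤ t → d t ≤ -1 := by
    intro t ht
    have hg : g t ≤ g T := hganti (Set.mem_Ici.mpr hT0) (Set.mem_Ici.mpr (hT0.trans ht)) ht
    simp only [hgdef] at hg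
    nlinarith [mul_le_mul_of_nonneg_left ht (le_of_lt hk2)]
  -- Step 2: h t = (d t)⁻¹ - t/2 is monotone on [T, ∞)
  set h : ℝ → ℝ := fun t => (d t)⁻¹ - t / 2 with hhdef
  have hne : ∀ t, T ≤ t → d t ≠ 0 := fun t ht => by
    have := hdneg t ht; intro h0; rw [h0] at this; linarith
  have hhderiv : ∀ t ∈ Set.Ici T,
      HasDerivAt h (-(-(1 / 2) * ((d t) ^ 2 + 4 * k ^ 2 - C₀ * (φ t) ^ 2)) / (d t) ^ 2 - 1 / 2) t := by
    intro t ht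
    rw [Set.mem_Ici] at ht
    have h1 : HasDerivAt (fun t : ℝ => t / 2) (1 / 2) t := by
      simpa using (hasDerivAt_id t).div_const 2
    exact ((hd t (hT0.trans ht)).inv (hne t ht)).sub h1
  have hhmono : MonotoneOn h (Set.Ici T) := by
    apply monotoneOn_of_deriv_nonneg (convex_Ici T)
    · exact fun t ht => ((hhderiv t ht).continuousAt).continuousWithinAt
    · intro t ht
      rw [interior_Ici] at ht
      exact ((hhderiv t (Set.mem_Ici.mpr (le_of_lt ht))).differentiableAt).differentiableWithinAt
    · intro t ht
      rw [interior_Ici] at ht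
      rw [(hhderiv t (Set.mem_Ici.mpr (le_of_lt ht))).deriv]
      have hdt : d t ≤ -1 := hdneg t (le_of_lt ht)
      have hA : (0:ℝ) < (d t) ^ 2 := by nlinarith
      rw [sub_nonneg, le_div_iff₀ hA]
      nlinarith [mul_nonneg (neg_nonneg.mpr hC) (sq_nonneg (φ t))]
  -- Step 3: contradiction at time S = T + 4
  have hS : T ≤ T + 4 := by linarith
  have hmono := hhmono (Set.self_mem_Ici) (Set.mem_Ici.mpr hS) hS
  simp only [hhdef] at hmono
  have hdS : d (T + 4) ≤ -1 := hdneg _ hS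
  have hinvS : (d (T + 4))⁻¹ ≤ 0 := inv_nonpos.mpr (by linarith)
  have hinvT : -1 ≤ (d T)⁻¹ := by
    have hm : d T * (d T)⁻¹ = 1 := mul_inv_cancel₀ (hne T le_rfl)
    nlinarith [hm, hdT]
  linarith
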